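/- Let P and Q be orthogonal projections on a complex Hilbert space H. Then ‖PQ + QP‖ = ‖PQP‖ + ‖PQP‖^{1/2}. -/

import Mathlib

set_option synthInstance.maxHeartbeats 400000
set_option maxHeartbeats 2000000

open scoped InnerProductSpace
open ContinuousLinearMap

section Aux
variable {H : Type*} [NormedAddCommGroup H] [InnerProductSpace ℂ H] [CompleteSpace H]
variable {H : Type*} [NormedAddCommGroup H] [InnerProductSpace ℂ H] [CompleteSpace H]

lemma aux_symm {P : H →L[ℂ] H} (hP : IsSelfAdjoint P) (x y : H) :
    ⟪P x, y⟫_ℂ = ⟪x, P y⟫_ℂ := hP.isSymmetric x y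

omit [CompleteSpace H] in
lemma aux_idem {P : H →L[ℂ] H} (hP2 : P * P = P) (x : H) : P (P x) = P x := by
  rw [← ContinuousLinearMap.mul_apply, hP2]

omit [CompleteSpace H] in
lemma aux_self_re (g : H) : Complex.re ⟪g, g⟫_ℂ = ‖g‖ ^ 2 := by
  rw [inner_self_eq_norm_sq_to_K]; norm_cast

lemma aux_pyth {P : H →L[ℂ] H} (hP : IsSelfAdjoint P) (hP2 : P * P = P) (g : H) :
    ‖g - P g‖ ^ 2 = ‖g‖ ^ 2 - ‖P g‖ ^ 2 := by
  have h1 : ⟪g, P g⟫_ℂ = ⟪P g, P g⟫_ℂ := by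
    conv_lhs => rw [← aux_idem hP2 g, ← aux_symm hP]
  have h2 : Complex.re ⟪g, P g⟫_ℂ = ‖P g‖ ^ 2 := by rw [h1, aux_self_re]
  have h3 := norm_sub_sq (𝕜 := ℂ) g (P g)
  simp only [RCLike.re_to_complex] at h3
  rw [h3, h2]; ring

lemma aux_contr {P : H →L[ℂ] H} (hP : IsSelfAdjoint P) (hP2 : P * P = P) (x : H) :
    ‖P x‖ ≤ ‖x‖ := by
  have h1 : ⟪P x, P x⟫_ℂ = ⟪x, P x⟫_ℂ := by
    conv_lhs => rw [aux_symm hP, aux_idem hP2]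
  have h2 : (‖P x‖ : ℝ) ^ 2 = Complex.re ⟪x, P x⟫_ℂ := by
    rw [← h1, aux_self_re]
  have h3 := re_inner_le_norm (𝕜 := ℂ) x (P x)
  simp only [RCLike.re_to_complex] at h3
  rcases eq_or_lt_of_le (norm_nonneg (P x)) with h0 | h0
  · rw [← h0]; exact norm_nonneg x
  · nlinarith

lemma aux_norm_le_of_inner {T : H →L[ℂ] H} (hT : IsSelfAdjoint T) {M : ℝ} (hM : 0 ≤ M)
    (h : ∀ x : H, |Complex.re ⟪T x, x⟫_ℂ| ≤ M * ‖x‖ ^ 2) : ‖T‖ ≤ M := by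
  have hsym := hT.isSymmetric
  have key : ∀ x y : H, Complex.re ⟪T x, y⟫_ℂ ≤ M / 2 * (‖x‖ ^ 2 + ‖y‖ ^ 2) := by
    intro x y
    have e1 : Complex.re ⟪T (x + y), x + y⟫_ℂ - Complex.re ⟪T (x - y), x - y⟫_ℂ
        = 4 * Complex.re ⟪T x, y⟫_ℂ := by
      have hyx : ⟪T y, x⟫_ℂ = starRingEnd ℂ ⟪T x, y⟫_ℂ :=
        ((inner_conj_symm (T y) x).symm.trans (congrArg (starRingEnd ℂ) (hsym x y)).symm : _)
      simp only [map_add, map_sub, inner_add_left, inner_add_right, inner_sub_left,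
        inner_sub_right, hyx]
      simp only [Complex.add_re, Complex.sub_re, Complex.conj_re]
      ring
    have h1 := (abs_le.mp (h (x + y))).2
    have h2 := (abs_le.mp (h (x - y))).1
    have hpar := parallelogram_law_with_norm ℂ x y
    nlinarith [h1, h2]
  refine opNorm_le_bound T hM fun x => ?_
  rcases eq_or_ne (T x) 0 with h0 | h0
  · rw [h0, norm_zero]; positivity
  · have hTx : (0:ℝ) < ‖T x‖ := norm_pos_iff.mpr h0
    have hxpos : (0:ℝ) < ‖x‖ := by
      rcases eq_or_ne x 0 with rfl | hx
      · simp at h0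
      · exact norm_pos_iff.mpr hx
    set y : H := ((‖x‖ / ‖T x‖ : ℝ) : ℂ) • T x with hy
    have hny : ‖y‖ = ‖x‖ := by
      rw [hy, norm_smul, Complex.norm_real, Real.norm_eq_abs,
        abs_of_nonneg (by positivity)]
      field_simp
    have hre : Complex.re ⟪T x, y⟫_ℂ = ‖x‖ * ‖T x‖ := by
      rw [hy, inner_smul_right, inner_self_eq_norm_sq_to_K]
      simp [pow_two, Complex.mul_re, Complex.ofReal_re, Complex.ofReal_im]
      field_simp
    have := key x y
    rw [hre, hny] at this
    nlinarith

lemma aux_real_ineq {a b r w c : ℝ} (ha : 0 ≤ a) (hb : 0 ≤ b) (hw : 0 ≤ w) (hc : 0 ≤ c)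
    (hwr : w ≤ r) (hrc : r ≤ c * a) (hkey : a ^ 2 * w ^ 2 ≤ r ^ 2 * (a ^ 2 - r ^ 2)) :
    2 * r ^ 2 + 2 * b * w ≤ (c ^ 2 + c) * (a ^ 2 + b ^ 2) := by
  have hr : 0 ≤ r := le_trans hw hwr
  rcases eq_or_lt_of_le hr with hr0 | hrpos
  · have hw0 : w = 0 := le_antisymm (hwr.trans hr0.symm.le) hw
    have hr0' : r = 0 := hr0.symm
    rw [hw0, hr0']
    nlinarith [sq_nonneg a, sq_nonneg b]
  · have hapos : 0 < a := by nlinarith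
    have hK : (0:ℝ) < r * (a + r) * a ^ 2 := by positivity
    have sq1 : 2 * b * w * (r * (a + r) * a ^ 2) ≤ w ^ 2 * a ^ 4 + r ^ 2 * (a + r) ^ 2 * b ^ 2 := by
      nlinarith [sq_nonneg (w * a ^ 2 - r * (a + r) * b)]
    have h2 : w ^ 2 * a ^ 4 ≤ a ^ 2 * (r ^ 2 * (a ^ 2 - r ^ 2)) := by
      nlinarith [mul_le_mul_of_nonneg_left hkey (sq_nonneg a)]
    have h3 : r ^ 2 + r * a ≤ (c ^ 2 + c) * a ^ 2 := by
      nlinarith [mul_le_mul hrc hrc hr (mul_nonneg hc ha), mul_le_mul_of_nonneg_right hrc ha]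
    have A3 := mul_le_mul_of_nonneg_left h3 (by positivity : (0:ℝ) ≤ r * (a + r) * a ^ 2)
    have A4 := mul_le_mul_of_nonneg_left h3 (by positivity : (0:ℝ) ≤ r * (a + r) * b ^ 2)
    rw [← mul_le_mul_iff_of_pos_right hK]
    nlinarith [sq1, h2, A3, A4]

lemma aux_upper {P Q : H →L[ℂ] H} (hP : IsSelfAdjoint P) (hP2 : P * P = P)
    (hQ : IsSelfAdjoint Q) (hQ2 : Q * Q = Q) :
    ‖P * Q + Q * P‖ ≤ ‖P * Q‖ ^ 2 + ‖P * Q‖ := by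
  set c := ‖P * Q‖ with hc
  have hc0 : 0 ≤ c := norm_nonneg _
  have hQP : ‖Q * P‖ = c := by
    rw [hc, show Q * P = star (P * Q) by rw [star_mul, hP.star_eq, hQ.star_eq], norm_star]
  have hT_sa : IsSelfAdjoint (P * Q + Q * P) := by
    rw [IsSelfAdjoint, star_add, star_mul, star_mul, hP.star_eq, hQ.star_eq, add_comm]
  have hM : (0:ℝ) ≤ c ^ 2 + c := by positivity
  refine le_trans (aux_norm_le_of_inner hT_sa hM ?_) (by ring_nf; rfl)
  intro x
  set g := Q (P x) with hg
  set a := ‖P x‖ with ha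
  set b := ‖x - P x‖ with hb
  set r := ‖g‖ with hr
  set w := ‖g - P g‖ with hw
  -- basic real facts
  have hxab : a ^ 2 + b ^ 2 = ‖x‖ ^ 2 := by
    have := aux_pyth hP hP2 x
    rw [← hb, ← ha] at this; linarith
  have hpyg := aux_pyth hP hP2 g
  rw [← hw, ← hr] at hpyg
  have hwr : w ≤ r := by
    have h1 : (0:ℝ) ≤ ‖P g‖ := norm_nonneg _
    nlinarith [norm_nonneg (g - P g), norm_nonneg g]
  have hrc : r ≤ c * a := by
    have h1 : (Q * P) (P x) = g := by
      rw [ContinuousLinearMap.mul_apply, aux_idem hP2, hg]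
    calc r = ‖(Q * P) (P x)‖ := by rw [h1]
    _ ≤ ‖Q * P‖ * a := le_opNorm _ _
    _ = c * a := by rw [hQP]
  -- r^2 = re ⟪g, P x⟫ and r^2 ≤ ‖P g‖ * a
  have hgg : ⟪g, P x⟫_ℂ = ⟪g, g⟫_ℂ := by
    rw [hg]
    conv_lhs => rw [← aux_idem hQ2 (P x)]
    rw [aux_symm hQ]
  have hgPx_re : Complex.re ⟪g, P x⟫_ℂ = r ^ 2 := by rw [hgg, aux_self_re]
  have hp : r ^ 2 ≤ ‖P g‖ * a := by
    have h1 : ⟪g, P x⟫_ℂ = ⟪P g, P x⟫_ℂ := by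
      conv_lhs => rw [← aux_idem hP2 x, ← aux_symm hP]
    have h2 := re_inner_le_norm (𝕜 := ℂ) (P g) (P x)
    simp only [RCLike.re_to_complex] at h2
    rw [← hgPx_re, h1]
    exact h2
  have hkey : a ^ 2 * w ^ 2 ≤ r ^ 2 * (a ^ 2 - r ^ 2) := by
    have h4 := mul_le_mul hp hp (by positivity) (by positivity : (0:ℝ) ≤ ‖P g‖ * a)
    nlinarith [sq_nonneg (‖P g‖ * a)]
  -- re inner product identity
  have hP0 : P (x - P x) = 0 := by rw [map_sub, aux_idem hP2, sub_self]
  have h01 : ⟪P g, x - P x⟫_ℂ = 0 := by rw [aux_symm hP, hP0, inner_zero_right]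
  have hsplit : ⟪g, x⟫_ℂ = ⟪g, P x⟫_ℂ + ⟪g - P g, x - P x⟫_ℂ := by
    rw [inner_sub_left, h01, sub_zero, ← inner_add_right]
    congr 1
    abel
  have hTxx : Complex.re ⟪(P * Q + Q * P) x, x⟫_ℂ
      = 2 * (r ^ 2 + Complex.re ⟪g - P g, x - P x⟫_ℂ) := by
    have e1 : (P * Q + Q * P) x = P (Q x) + Q (P x) := by
      simp [ContinuousLinearMap.add_apply, ContinuousLinearMap.mul_apply]
    have e2 : ⟪P (Q x), x⟫_ℂ = ⟪x, g⟫_ℂ := by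
      rw [aux_symm hP, aux_symm hQ, hg]
    have e3 : Complex.re ⟪x, g⟫_ℂ = Complex.re ⟪g, x⟫_ℂ := by
      rw [← inner_conj_symm x g, Complex.conj_re]
    rw [e1, inner_add_left, Complex.add_re, e2, e3, ← hg, hsplit]
    rw [Complex.add_re, hgPx_re]
    ring
  -- final bound
  have hbound : |Complex.re ⟪g - P g, x - P x⟫_ℂ| ≤ w * b := by
    refine le_trans (Complex.abs_re_le_norm _) ?_
    exact norm_inner_le_norm _ _
  have hmain := aux_real_ineq (ha ▸ norm_nonneg _) (hb ▸ norm_nonneg _) (hw ▸ norm_nonneg _)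
      hc0 hwr hrc hkey
  rw [hTxx, ← hxab]
  have h5 := abs_le.mp hbound
  rw [abs_le]
  constructor
  · nlinarith [sq_nonneg r, h5.1]
  · nlinarith [h5.2]

lemma aux_lower {P Q : H →L[ℂ] H} (hP : IsSelfAdjoint P) (hP2 : P * P = P)
    (hQ : IsSelfAdjoint Q) (hQ2 : Q * Q = Q) :
    ‖P * Q‖ ^ 2 + ‖P * Q‖ ≤ ‖P * Q + Q * P‖ := by
  set c := ‖P * Q‖ with hc
  have hc0 : 0 ≤ c := norm_nonneg _
  rcases eq_or_lt_of_le hc0 with hc0' | hcpos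
  · rw [← hc0']; simpa using norm_nonneg (P * Q + Q * P)
  have hQP : ‖Q * P‖ = c := by
    rw [hc, show Q * P = star (P * Q) by rw [star_mul, hP.star_eq, hQ.star_eq], norm_star]
  have hT_sa : IsSelfAdjoint (P * Q + Q * P) := by
    rw [IsSelfAdjoint, star_add, star_mul, star_mul, hP.star_eq, hQ.star_eq, add_comm]
  have hc1 : c ≤ 1 := by
    have h1 : ‖P * Q‖ ≤ ‖P‖ * ‖Q‖ := norm_mul_le _ _
    have hPn : ‖P‖ ≤ 1 := opNorm_le_bound _ zero_le_one
      (fun z => by simpa using aux_contr hP hP2 z)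
    have hQn : ‖Q‖ ≤ 1 := opNorm_le_bound _ zero_le_one
      (fun z => by simpa using aux_contr hQ hQ2 z)
    calc c ≤ ‖P‖ * ‖Q‖ := h1
    _ ≤ 1 * 1 := mul_le_mul hPn hQn (norm_nonneg _) zero_le_one
    _ = 1 := by ring
  set T := P * Q + Q * P with hT
  -- main pointwise estimate
  have key : ∀ t ∈ Set.Ioo (0:ℝ) c, t ^ 2 + t * Real.sqrt (t ^ 2 + 1 - c ^ 2) ≤ ‖T‖ := by
    rintro t ⟨ht0, htc⟩
    obtain ⟨z, hz1, hzt⟩ := (Q * P).exists_lt_apply_of_lt_opNorm (by rwa [hQP] : t < ‖Q * P‖)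
    have hQPz : (Q * P) z = Q (P z) := rfl
    have hPz : P z ≠ 0 := by
      intro h0
      rw [hQPz, h0] at hzt
      simp at hzt; linarith
    have hPzpos : (0:ℝ) < ‖P z‖ := norm_pos_iff.mpr hPz
    set u : H := ((‖P z‖⁻¹ : ℝ) : ℂ) • P z with hu
    have hu1 : ‖u‖ = 1 := by
      rw [hu, norm_smul, Complex.norm_real, Real.norm_eq_abs, abs_of_nonneg (by positivity)]
      field_simp
    have hPu : P u = u := by
      rw [hu, map_smul, aux_idem hP2]
    set t' := ‖Q u‖ with ht'
    have htt' : t < t' := by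
      have e1 : Q u = ((‖P z‖⁻¹ : ℝ) : ℂ) • Q (P z) := by rw [hu, map_smul]
      have e2 : t' = ‖P z‖⁻¹ * ‖Q (P z)‖ := by
        rw [ht', e1, norm_smul, Complex.norm_real, Real.norm_eq_abs,
          abs_of_nonneg (by positivity)]
      have hle : ‖P z‖ ≤ 1 := le_trans (aux_contr hP hP2 z) hz1.le
      have hinv : 1 ≤ ‖P z‖⁻¹ := by
        rw [le_inv_comm₀ one_pos hPzpos]; simpa using hle
      calc t < ‖Q (P z)‖ := by rw [hQPz] at hzt; exact hzt
      _ = 1 * ‖Q (P z)‖ := (one_mul _).symm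
      _ ≤ ‖P z‖⁻¹ * ‖Q (P z)‖ := mul_le_mul_of_nonneg_right hinv (norm_nonneg _)
      _ = t' := e2.symm
    have ht'pos : 0 < t' := lt_trans ht0 htt'
    set yv : H := Q u - P (Q u) with hyv
    set s := ‖yv‖ with hs
    have hs0 : 0 ≤ s := norm_nonneg _
    have hs2 : s ^ 2 = t' ^ 2 - ‖P (Q u)‖ ^ 2 := by
      rw [hs, hyv, aux_pyth hP hP2 (Q u), ht']
    have hPQu : ‖P (Q u)‖ ≤ c * t' := by
      have e1 : P (Q u) = (P * Q) (Q u) := by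
        rw [ContinuousLinearMap.mul_apply, aux_idem hQ2]
      calc ‖P (Q u)‖ = ‖(P * Q) (Q u)‖ := by rw [e1]
      _ ≤ ‖P * Q‖ * ‖Q u‖ := le_opNorm _ _
      _ = c * t' := by rw [← hc, ← ht']
    have hs2' : t' ^ 2 * (1 - c ^ 2) ≤ s ^ 2 := by
      have h4 := mul_le_mul hPQu hPQu (norm_nonneg _) (by positivity)
      nlinarith
    set lam := t' ^ 2 + Real.sqrt (t' ^ 4 + s ^ 2) with hlam
    have hsqrt_nonneg : 0 ≤ Real.sqrt (t' ^ 4 + s ^ 2) := Real.sqrt_nonneg _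
    have hlam_pos : 0 < lam := by positivity
    have hlam_sq : lam ^ 2 = 2 * t' ^ 2 * lam + s ^ 2 := by
      have h1 : (lam - t' ^ 2) ^ 2 = t' ^ 4 + s ^ 2 := by
        rw [hlam, add_sub_cancel_left]
        exact Real.sq_sqrt (by positivity)
      nlinarith [h1]
    -- inner product facts
    have hPyv : P yv = 0 := by rw [hyv, map_sub, aux_idem hP2, sub_self]
    have fQuu : ⟪Q u, u⟫_ℂ = ((t' ^ 2 : ℝ) : ℂ) := by
      conv_lhs => rw [← aux_idem hQ2 u]
      rw [aux_symm hQ, inner_self_eq_norm_sq_to_K, ← ht']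
      norm_cast
    have fQuPQu : ⟪Q u, P (Q u)⟫_ℂ = ((‖P (Q u)‖ ^ 2 : ℝ) : ℂ) := by
      conv_lhs => rw [← aux_idem hP2 (Q u), ← aux_symm hP]
      rw [inner_self_eq_norm_sq_to_K]
      norm_cast
    have fTu : T u = P (Q u) + Q u := by
      rw [hT, ContinuousLinearMap.add_apply, ContinuousLinearMap.mul_apply,
        ContinuousLinearMap.mul_apply, hPu]
    have f1 : ⟪T u, u⟫_ℂ = ((2 * t' ^ 2 : ℝ) : ℂ) := by
      rw [fTu, inner_add_left, aux_symm hP, hPu, fQuu]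
      norm_cast; ring
    have fQQ : ⟪Q u, Q u⟫_ℂ = ((t' ^ 2 : ℝ) : ℂ) := by
      rw [inner_self_eq_norm_sq_to_K, ← ht']; norm_cast
    have f3 : ⟪T u, yv⟫_ℂ = ((s ^ 2 : ℝ) : ℂ) := by
      rw [fTu, inner_add_left, aux_symm hP, hPyv, inner_zero_right,
        inner_sub_right, fQuPQu, fQQ, hs2]
      push_cast
      ring
    have f4 : ⟪T yv, u⟫_ℂ = ((s ^ 2 : ℝ) : ℂ) := by
      have h1 : ⟪T yv, u⟫_ℂ = ⟪yv, T u⟫_ℂ := hT_sa.isSymmetric yv u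
      rw [h1, ← inner_conj_symm yv (T u), f3]
      exact Complex.conj_ofReal _
    have f5 : ⟪T yv, yv⟫_ℂ = 0 := by
      have e1 : T yv = P (Q yv) := by
        rw [hT, ContinuousLinearMap.add_apply, ContinuousLinearMap.mul_apply,
          ContinuousLinearMap.mul_apply, hPyv, map_zero, add_zero]
      rw [e1, aux_symm hP, hPyv, inner_zero_right]
    have huy : ⟪u, yv⟫_ℂ = 0 := by
      rw [hyv, inner_sub_right]
      conv_lhs => rw [← aux_symm hP, hPu]
      exact sub_self _
    set v : H := ((lam : ℝ) : ℂ) • u + yv with hv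
    have hTvv : Complex.re ⟪T v, v⟫_ℂ = lam ^ 2 * (2 * t' ^ 2) + 2 * lam * s ^ 2 := by
      have e1 : T v = ((lam : ℝ) : ℂ) • T u + T yv := by
        rw [hv, map_add, map_smul]
      rw [hv, e1]
      simp only [inner_add_left, inner_add_right, inner_smul_left, inner_smul_right]
      rw [f1, f3, f4, f5]
      simp only [Complex.conj_ofReal, mul_zero, add_zero]
      simp only [← Complex.ofReal_mul, ← Complex.ofReal_add, Complex.ofReal_re]
      ring
    have hnv : ‖v‖ ^ 2 = lam ^ 2 + s ^ 2 := by
      have h1 := norm_add_sq (𝕜 := ℂ) (((lam : ℝ) : ℂ) • u) yv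
      simp only [RCLike.re_to_complex] at h1
      have h2 : ⟪((lam : ℝ) : ℂ) • u, yv⟫_ℂ = 0 := by
        rw [inner_smul_left, huy, mul_zero]
      have h3 : ‖((lam : ℝ) : ℂ) • u‖ = lam := by
        rw [norm_smul, Complex.norm_real, Real.norm_eq_abs, abs_of_nonneg hlam_pos.le, hu1,
          mul_one]
      rw [hv, h1, h2, h3, hs]
      simp
    have hvpos : 0 < ‖v‖ ^ 2 := by rw [hnv]; positivity
    have hlamT : lam ≤ ‖T‖ := by
      have h1 : Complex.re ⟪T v, v⟫_ℂ ≤ ‖T v‖ * ‖v‖ := by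
        have := re_inner_le_norm (𝕜 := ℂ) (T v) v
        simpa using this
      have h2 : ‖T v‖ ≤ ‖T‖ * ‖v‖ := le_opNorm _ _
      have h3 : lam * ‖v‖ ^ 2 ≤ ‖T‖ * ‖v‖ ^ 2 := by
        have e1 : lam * ‖v‖ ^ 2 = Complex.re ⟪T v, v⟫_ℂ := by
          rw [hTvv, hnv]; nlinarith [hlam_sq]
        calc lam * ‖v‖ ^ 2 = Complex.re ⟪T v, v⟫_ℂ := e1
        _ ≤ ‖T v‖ * ‖v‖ := h1
        _ ≤ ‖T‖ * ‖v‖ * ‖v‖ := mul_le_mul_of_nonneg_right h2 (norm_nonneg _)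
        _ = ‖T‖ * ‖v‖ ^ 2 := by ring
      exact le_of_mul_le_mul_right h3 hvpos
    -- compare with f t
    have hstep : t ^ 2 + t * Real.sqrt (t ^ 2 + 1 - c ^ 2) ≤ lam := by
      have harg : 0 ≤ t ^ 2 + 1 - c ^ 2 := by nlinarith
      have h1 : t' ^ 2 * (t' ^ 2 + 1 - c ^ 2) ≤ t' ^ 4 + s ^ 2 := by nlinarith [hs2']
      have h2 : t' * Real.sqrt (t' ^ 2 + 1 - c ^ 2) ≤ Real.sqrt (t' ^ 4 + s ^ 2) := by
        have e1 : t' * Real.sqrt (t' ^ 2 + 1 - c ^ 2) = Real.sqrt (t' ^ 2 * (t' ^ 2 + 1 - c ^ 2)) := by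
          rw [Real.sqrt_mul (sq_nonneg t'), Real.sqrt_sq ht'pos.le]
        rw [e1]
        exact Real.sqrt_le_sqrt h1
      have h3 : t * Real.sqrt (t ^ 2 + 1 - c ^ 2) ≤ t' * Real.sqrt (t' ^ 2 + 1 - c ^ 2) := by
        apply mul_le_mul htt'.le (Real.sqrt_le_sqrt (by nlinarith)) (Real.sqrt_nonneg _) ht'pos.le
      rw [hlam]
      nlinarith [h2, h3, htt']
    linarith [hstep, hlamT]
  -- take the limit t → c
  have hcont : Filter.Tendsto (fun t : ℝ => t ^ 2 + t * Real.sqrt (t ^ 2 + 1 - c ^ 2))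
      (nhdsWithin c (Set.Ioo 0 c)) (nhds (c ^ 2 + c)) := by
    have h1 : Continuous (fun t : ℝ => t ^ 2 + t * Real.sqrt (t ^ 2 + 1 - c ^ 2)) := by
      fun_prop
    have h2 := h1.tendsto c
    have h3 : c ^ 2 + c * Real.sqrt (c ^ 2 + 1 - c ^ 2) = c ^ 2 + c := by
      rw [show c ^ 2 + 1 - c ^ 2 = 1 by ring, Real.sqrt_one, mul_one]
    rw [← h3]
    exact h2.mono_left nhdsWithin_le_nhds
  haveI : (nhdsWithin c (Set.Ioo 0 c)).NeBot := right_nhdsWithin_Ioo_neBot hcpos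
  exact le_of_tendsto hcont (Filter.eventually_of_mem self_mem_nhdsWithin key)

end Aux

set_option synthInstance.maxHeartbeats 400000
set_option maxHeartbeats 1000000

/-- For orthogonal projections `P, Q` on a complex Hilbert space,
`‖PQ + QP‖ = ‖PQP‖ + ‖PQP‖^{1/2}`. -/
theorem norm_anticommutator_eq'
    {H : Type*} [NormedAddCommGroup H] [InnerProductSpace ℂ H] [CompleteSpace H]
    (P Q : H →L[ℂ] H) (hP : IsSelfAdjoint P) (hP2 : P * P = P)
    (hQ : IsSelfAdjoint Q) (hQ2 : Q * Q = Q) :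
    ‖P * Q + Q * P‖ = ‖P * Q * P‖ + Real.sqrt ‖P * Q * P‖ := by
  have h1 : ‖P * Q * P‖ = ‖P * Q‖ * ‖P * Q‖ := by
    have e : P * Q * P = (P * Q) * star (P * Q) := by
      rw [star_mul, hP.star_eq, hQ.star_eq]
      calc P * Q * P = P * (Q * Q) * P := by rw [hQ2]
      _ = P * Q * (Q * P) := by simp only [mul_assoc]
    rw [e, CStarRing.norm_self_mul_star]
  have h2 : Real.sqrt ‖P * Q * P‖ = ‖P * Q‖ := by
    rw [h1]; exact Real.sqrt_mul_self (norm_nonneg _)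
  have hu := aux_upper hP hP2 hQ hQ2
  have hl := aux_lower hP hP2 hQ hQ2
  rw [h2, h1]
  nlinarith [hu, hl]
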